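/- Let (δ_s,𝒢) be an ICSIE instance and let (0,𝒢̄) be the instance obtained by replacing each side information set 𝒳_i by a subset 𝒳̄_i ⊆ 𝒳_i with |𝒳_i \ 𝒳̄_i| ≤ 2δ_s^(i) and setting all error resistance capabilities to 0 (messages and wanted sets unchanged). Then N_opt^q(0,𝒢̄) ≤ N_opt^q(δ_s,𝒢). -/

import Mathlib

open Finset

/-- Restriction of a vector to the coordinates in a finite index set. -/
def proj {ι 𝔽 : Type*} (A : Finset ι) (x : ι → 𝔽) : {a // a ∈ A} → 𝔽 :=
  fun a => x a.1

/-- `enc` is a valid (δ,𝒢)-ICSIE encoding: decoders exist recovering the wanted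
messages from the codeword and side information with at most `δ r` errors. -/
def ValidEnc (𝔽 : Type*) [DecidableEq 𝔽] {ι R C : Type*}
    (X f : R → Finset ι) (δ : R → ℕ) (enc : (ι → 𝔽) → C) : Prop :=
  ∃ D : (r : R) → C → ({a // a ∈ X r} → 𝔽) → ({a // a ∈ f r} → 𝔽),
    ∀ (r : R) (x : ι → 𝔽) (xt : {a // a ∈ X r} → 𝔽),
      hammingDist (proj (X r) x) xt ≤ δ r → D r (enc x) xt = proj (f r) x

/-- Optimal codelength of a (δ,𝒢)-ICSIE. -/
noncomputable def Nopt (𝔽 : Type*) [DecidableEq 𝔽] {ι R : Type*}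
    (X f : R → Finset ι) (δ : R → ℕ) : ℕ :=
  sInf {N | ∃ enc : (ι → 𝔽) → (Fin N → 𝔽), ValidEnc 𝔽 X f δ enc}

/-- Two inputs with the same codeword agreeing on the shrunk side information
set are decoded identically. -/
lemma key {𝔽 : Type*} [DecidableEq 𝔽] {n m : ℕ} {C : Type*}
    (X Xbar : Fin m → Finset (Fin n)) (f : Fin m → Finset (Fin n)) (δ : Fin m → ℕ)
    (hcard : ∀ i, (X i \ Xbar i).card ≤ 2 * δ i)
    (enc : (Fin n → 𝔽) → C)
    (D : (r : Fin m) → C → ({a // a ∈ X r} → 𝔽) → ({a // a ∈ f r} → 𝔽))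
    (hD : ∀ (r : Fin m) (x : Fin n → 𝔽) (xt : {a // a ∈ X r} → 𝔽),
      hammingDist (proj (X r) x) xt ≤ δ r → D r (enc x) xt = proj (f r) x)
    (r : Fin m) (x x' : Fin n → 𝔽) (henc : enc x = enc x')
    (hXb : proj (Xbar r) x = proj (Xbar r) x') :
    proj (f r) x = proj (f r) x' := by
  classical
  set Ds : Finset (Fin n) := (X r \ Xbar r).filter (fun j => x j ≠ x' j) with hDs
  have hDk : Ds.card ≤ 2 * δ r := le_trans (card_le_card (filter_subset _ _)) (hcard r)
  obtain ⟨S1, hS1sub, hS1card⟩ :=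
    Finset.exists_subset_card_eq (min_le_right (δ r) Ds.card)
  set xt : {a // a ∈ X r} → 𝔽 := fun a => if a.1 ∈ S1 then x' a.1 else x a.1 with hxt
  have h1 : hammingDist (proj (X r) x) xt ≤ δ r := by
    calc hammingDist (proj (X r) x) xt ≤ S1.card := by
          unfold hammingDist
          apply Finset.card_le_card_of_injOn (fun a => a.1)
          · intro a ha
            simp only [mem_coe, mem_filter, mem_univ, true_and] at ha
            by_contra hne
            apply ha
            simp [proj, hxt, Finset.mem_coe.not.mp hne]
          · intro a _ b _ hab
            exact Subtype.ext hab
      _ ≤ δ r := by rw [hS1card]; exact min_le_left _ _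
  have h2 : hammingDist (proj (X r) x') xt ≤ δ r := by
    calc hammingDist (proj (X r) x') xt ≤ (Ds \ S1).card := by
          unfold hammingDist
          apply Finset.card_le_card_of_injOn (fun a => a.1)
          · intro a ha
            simp only [mem_coe, mem_filter, mem_univ, true_and] at ha
            have hnS1 : a.1 ∉ S1 := by
              intro hm; apply ha; simp [proj, hxt, hm]
            have hxa : x' a.1 ≠ x a.1 := by
              intro he; apply ha; simp [proj, hxt, hnS1, he]
            have hnXb : a.1 ∉ Xbar r := by
              intro hm
              exact hxa (congrFun hXb ⟨a.1, hm⟩).symm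
            refine Finset.mem_sdiff.mpr ⟨?_, hnS1⟩
            exact Finset.mem_filter.mpr ⟨Finset.mem_sdiff.mpr ⟨a.2, hnXb⟩,
              fun he => hxa he.symm⟩
          · intro a _ b _ hab
            exact Subtype.ext hab
      _ ≤ δ r := by
          rw [Finset.card_sdiff_of_subset hS1sub, hS1card]
          omega
  have e1 := hD r x xt h1
  have e2 := hD r x' xt h2
  rw [henc] at e1
  exact e1.symm.trans e2

/-- A valid (δ,𝒢)-encoding is a valid (0,𝒢̄)-encoding for the shrunk instance. -/
lemma valid_shrink {𝔽 : Type*} [Field 𝔽] [DecidableEq 𝔽] {n m : ℕ} {C : Type*}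
    (X Xbar f : Fin m → Finset (Fin n)) (δ : Fin m → ℕ)
    (hcard : ∀ i, (X i \ Xbar i).card ≤ 2 * δ i)
    (enc : (Fin n → 𝔽) → C) (h : ValidEnc 𝔽 X f δ enc) :
    ValidEnc 𝔽 Xbar f (fun _ => 0) enc := by
  classical
  obtain ⟨D, hD⟩ := h
  refine ⟨fun r c y =>
    if h : ∃ x : Fin n → 𝔽, enc x = c ∧ proj (Xbar r) x = y
    then proj (f r) h.choose else fun _ => (0 : 𝔽), ?_⟩
  intro r x y hy
  have hy0 : proj (Xbar r) x = y := by
    rw [← hammingDist_eq_zero]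
    exact Nat.le_zero.mp hy
  have hex : ∃ x' : Fin n → 𝔽, enc x' = enc x ∧ proj (Xbar r) x' = y := ⟨x, rfl, hy0⟩
  beta_reduce
  rw [dif_pos hex]
  obtain ⟨he, hp⟩ := hex.choose_spec
  exact key X Xbar f δ hcard enc D hD r _ x he (by rw [hp, hy0])

/-- shrinking each side information set `𝒳_i` to `𝒳̄_i ⊆ 𝒳_i`
with `|𝒳_i \ 𝒳̄_i| ≤ 2δ_s^(i)` and setting all capabilities to 0 can only
decrease the optimal codelength: `N_opt(0,𝒢̄) ≤ N_opt(δ_s,𝒢)`. -/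
theorem Nopt_shrink_le
    {𝔽 : Type*} [Field 𝔽] [Fintype 𝔽] [DecidableEq 𝔽]
    {n m : ℕ} (X Xbar f : Fin m → Finset (Fin n)) (δ : Fin m → ℕ)
    (hdisj : ∀ i, Disjoint (f i) (X i))
    (hsub : ∀ i, Xbar i ⊆ X i)
    (hcard : ∀ i, (X i \ Xbar i).card ≤ 2 * δ i) :
    Nopt 𝔽 Xbar f (fun _ => 0) ≤ Nopt 𝔽 X f δ := by
  have hne : {N | ∃ enc : (Fin n → 𝔽) → (Fin N → 𝔽), ValidEnc 𝔽 X f δ enc}.Nonempty := by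
    refine ⟨n, fun x => x, fun r c xt => proj (f r) c, ?_⟩
    intro r x xt _
    rfl
  have hmem := Nat.sInf_mem hne
  obtain ⟨enc, henc⟩ := hmem
  exact Nat.sInf_le ⟨enc, valid_shrink X Xbar f δ hcard enc henc⟩
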